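/- For every edge e of K_{3^2,1^n}, the deletion K_{3^2,1^n} − e is n-apex: there is a set of 6 vertices of K_{3^2,1^n} − e whose induced subgraph is planar and whose complement has size n. -/

import Mathlib

open SimpleGraph

/-- `H` is a minor of `G`: branch-set definition. -/
def IsMinor {W V : Type*} (H : SimpleGraph W) (G : SimpleGraph V) : Prop :=
  ∃ f : W → Set V,
    (∀ w, (f w).Nonempty) ∧
    (∀ w, (G.induce (f w)).Connected) ∧
    (Pairwise fun w₁ w₂ => Disjoint (f w₁) (f w₂)) ∧
    ∀ ⦃w₁ w₂⦄, H.Adj w₁ w₂ → ∃ v₁ ∈ f w₁, ∃ v₂ ∈ f w₂, G.Adj v₁ v₂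

/-- The complete graph on 5 vertices. -/
def K5 : SimpleGraph (Fin 5) := ⊤

/-- The complete bipartite graph `K_{3,3}`. -/
def K33 : SimpleGraph (Fin 3 ⊕ Fin 3) := completeBipartiteGraph (Fin 3) (Fin 3)

/-- Planarity in Wagner's form: no `K₅` minor and no `K_{3,3}` minor. -/
def IsPlanar {V : Type*} (G : SimpleGraph V) : Prop :=
  ¬ IsMinor K5 G ∧ ¬ IsMinor K33 G

/-- `G` is `n`-apex: some set of at most `n` vertices can be deleted to leave a planar graph. -/
def IsNApex {V : Type*} (G : SimpleGraph V) (n : ℕ) : Prop :=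
  ∃ U : Finset V, U.card ≤ n ∧ IsPlanar (G.induce (↑U : Set V)ᶜ)

/-- The complete multipartite graph `K_{3,3,1,…,1}` with two parts of size 3
and `n` singleton parts. -/
def KMulti (n : ℕ) : SimpleGraph (Fin 3 ⊕ Fin 3 ⊕ Fin n) :=
  SimpleGraph.fromRel (fun x y =>
    match x, y with
    | Sum.inl _, Sum.inl _ => False
    | Sum.inr (Sum.inl _), Sum.inr (Sum.inl _) => False
    | Sum.inr (Sum.inr i), Sum.inr (Sum.inr j) => i ≠ j
    | _, _ => True)

lemma involFin3 : ∀ τ : Fin 3 → Fin 3, (∀ i, τ (τ i) = i) → (∀ i, τ i ≠ i) → False := by decide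

lemma sum_card_le {V W : Type*} [Fintype V] [Fintype W] (f : W → Set V)
    (hdisj : Pairwise fun w₁ w₂ => Disjoint (f w₁) (f w₂)) :
    ∑ w : W, (Set.toFinite (f w)).toFinset.card ≤ Fintype.card V := by
  classical
  rw [← Finset.card_biUnion]
  · exact Finset.card_le_univ _
  · intro a _ b _ hab
    simpa [Finset.disjoint_left, Set.disjoint_left, Set.Finite.mem_toFinset]
      using hdisj hab

lemma exists_rep {V W : Type*} (f : W → Set V) (hne : ∀ w, (f w).Nonempty)
    (hdisj : Pairwise fun w₁ w₂ => Disjoint (f w₁) (f w₂)) :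
    ∃ g : W → V, (∀ w, g w ∈ f w) ∧ Function.Injective g := by
  refine ⟨fun w => (hne w).some, fun w => (hne w).some_mem, ?_⟩
  intro w w' he
  by_contra hww
  have h2 : (hne w).some ∈ f w' := by
    have := (hne w').some_mem
    simp only at he
    rw [he]
    exact this
  exact Set.disjoint_left.1 (hdisj hww) ((hne w).some_mem) h2

lemma key {V : Type*} [Fintype V] (hcard : Fintype.card V = 6)
    (G : SimpleGraph V) (m : V → V) (hm2 : ∀ x, m (m x) = x)
    (hmf : ∀ x, m x ≠ x) (hadj : ∀ x, ¬ G.Adj x (m x)) : IsPlanar G := by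
  classical
  have minj : Function.Injective m := fun a b h => by
    rw [← hm2 a, h, hm2]
  constructor
  · -- no K5 minor
    rintro ⟨f, hne, -, hdisj, hH⟩
    obtain ⟨g, hg, hginj⟩ := exists_rep f hne hdisj
    set F : Fin 5 → Finset V := fun w => (Set.toFinite (f w)).toFinset with hF
    have hmemF : ∀ w x, x ∈ F w ↔ x ∈ f w := fun w x => Set.Finite.mem_toFinset _
    have hsum : ∑ w : Fin 5, (F w).card ≤ Fintype.card V := sum_card_le f hdisj
    have h1 : ∀ w, 1 ≤ (F w).card := by
      intro w
      refine Finset.card_pos.2 ?_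
      exact ⟨g w, (hmemF w _).2 (hg w)⟩
    have hW : ∃ w0 : Fin 5, ∀ w, w ≠ w0 → (F w).card = 1 := by
      by_cases hex : ∃ w0, 2 ≤ (F w0).card
      · obtain ⟨w0, hw0⟩ := hex
        refine ⟨w0, fun w hw => ?_⟩
        by_contra hc
        have h2 : 2 ≤ (F w).card := by have := h1 w; omega
        have e1 : ∑ w' : Fin 5, (F w').card
            = (F w0).card + ∑ w' ∈ Finset.univ.erase w0, (F w').card :=
          (Finset.add_sum_erase _ (fun w' => (F w').card) (Finset.mem_univ w0)).symm
        have hwmem : w ∈ Finset.univ.erase w0 := by simp [hw]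
        have e2 : ∑ w' ∈ Finset.univ.erase w0, (F w').card
            = (F w).card + ∑ w' ∈ (Finset.univ.erase w0).erase w, (F w').card :=
          (Finset.add_sum_erase _ (fun w' => (F w').card) hwmem).symm
        have e3 : ((Finset.univ.erase w0).erase w).card • 1
            ≤ ∑ w' ∈ (Finset.univ.erase w0).erase w, (F w').card :=
          Finset.card_nsmul_le_sum _ _ _ (fun i _ => h1 i)
        have e4 : ((Finset.univ.erase w0).erase w).card = 3 := by
          rw [Finset.card_erase_of_mem hwmem, Finset.card_erase_of_mem (Finset.mem_univ w0)]
          simp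
        rw [hcard] at hsum
        rw [e4] at e3
        simp only [smul_eq_mul, mul_one] at e3
        omega
      · push_neg at hex
        exact ⟨0, fun w _ => by have := h1 w; have := hex w; omega⟩
    obtain ⟨w0, hw0⟩ := hW
    have hsing : ∀ w, w ≠ w0 → ∀ x ∈ f w, x = g w := by
      intro w hw x hx
      exact Finset.card_le_one.1 (le_of_eq (hw0 w hw)) x ((hmemF w x).2 hx)
        (g w) ((hmemF w (g w)).2 (hg w))
    have hsa : ∀ k : Fin 4, w0.succAbove k ≠ w0 := fun k => Fin.succAbove_ne w0 k
    have hxadj : ∀ k k' : Fin 4, k ≠ k' →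
        G.Adj (g (w0.succAbove k)) (g (w0.succAbove k')) := by
      intro k k' hkk
      have hadjK : K5.Adj (w0.succAbove k) (w0.succAbove k') := by
        simp only [K5, top_adj]
        exact fun h => hkk (Fin.succAbove_right_injective h)
      obtain ⟨v1, hv1, v2, hv2, hGadj⟩ := hH hadjK
      rwa [hsing _ (hsa k) v1 hv1, hsing _ (hsa k') v2 hv2] at hGadj
    have xne : ∀ k k' : Fin 4, k ≠ k' → g (w0.succAbove k) ≠ g (w0.succAbove k') :=
      fun k k' h e => h (Fin.succAbove_right_injective (hginj e))
    have A : ∀ k k' : Fin 4, m (g (w0.succAbove k)) ≠ g (w0.succAbove k') := by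
      intro k k' he
      by_cases hkk : k = k'
      · subst hkk; exact hmf _ he
      · exact hadj _ (he ▸ hxadj k k' hkk)
    have B : ∀ k k' : Fin 4, k ≠ k' →
        m (g (w0.succAbove k)) ≠ m (g (w0.succAbove k')) :=
      fun k k' h e => xne _ _ h (minj e)
    have hinj7 : Function.Injective
        (Sum.elim (fun k : Fin 4 => g (w0.succAbove k))
          (fun j : Fin 3 => m (g (w0.succAbove j.castSucc)))) := by
      rintro (k | j) (k' | j') he <;> simp only [Sum.elim_inl, Sum.elim_inr] at he
      · exact congrArg Sum.inl (Fin.succAbove_right_injective (hginj he))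
      · exact absurd he.symm (A _ _)
      · exact absurd he (A _ _)
      · refine congrArg Sum.inr ?_
        by_contra hjj
        exact B _ _ (fun h => hjj (Fin.castSucc_injective _ h)) he
    have hle := Fintype.card_le_of_injective _ hinj7
    rw [hcard] at hle
    simp at hle
  · -- no K33 minor
    rintro ⟨f, hne, -, hdisj, hH⟩
    obtain ⟨g, hg, hginj⟩ := exists_rep f hne hdisj
    set F : Fin 3 ⊕ Fin 3 → Finset V := fun w => (Set.toFinite (f w)).toFinset with hF
    have hmemF : ∀ w x, x ∈ F w ↔ x ∈ f w := fun w x => Set.Finite.mem_toFinset _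
    have hsum : ∑ w : Fin 3 ⊕ Fin 3, (F w).card ≤ Fintype.card V := sum_card_le f hdisj
    have h1 : ∀ w, 1 ≤ (F w).card := by
      intro w
      refine Finset.card_pos.2 ?_
      exact ⟨g w, (hmemF w _).2 (hg w)⟩
    have hone : ∀ w, (F w).card = 1 := by
      by_contra hc
      push_neg at hc
      obtain ⟨w1, hw1⟩ := hc
      have h2 : 2 ≤ (F w1).card := by have := h1 w1; omega
      have e1 : ∑ w' : Fin 3 ⊕ Fin 3, (F w').card
          = (F w1).card + ∑ w' ∈ Finset.univ.erase w1, (F w').card :=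
        (Finset.add_sum_erase _ (fun w' => (F w').card) (Finset.mem_univ w1)).symm
      have e3 : (Finset.univ.erase w1).card • 1
          ≤ ∑ w' ∈ Finset.univ.erase w1, (F w').card :=
        Finset.card_nsmul_le_sum _ _ _ (fun i _ => h1 i)
      have e4 : (Finset.univ.erase w1).card = 5 := by
        rw [Finset.card_erase_of_mem (Finset.mem_univ w1)]
        simp
      rw [hcard] at hsum
      rw [e4] at e3
      simp only [smul_eq_mul, mul_one] at e3
      omega
    have hsing : ∀ w, ∀ y ∈ f w, y = g w := by
      intro w y hy
      exact Finset.card_le_one.1 (le_of_eq (hone w)) y ((hmemF w y).2 hy)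
        (g w) ((hmemF w (g w)).2 (hg w))
    have hgbij : Function.Bijective g :=
      (Fintype.bijective_iff_injective_and_card g).2 ⟨hginj, by simp [hcard]⟩
    have hgadj : ∀ w1 w2, K33.Adj w1 w2 → G.Adj (g w1) (g w2) := by
      intro w1 w2 hA
      obtain ⟨v1, hv1, v2, hv2, hGadj⟩ := hH hA
      rwa [hsing _ v1 hv1, hsing _ v2 hv2] at hGadj
    have hP : ∀ i : Fin 3, ∃ j : Fin 3, g (Sum.inl j) = m (g (Sum.inl i)) := by
      intro i
      obtain ⟨w, hw⟩ := hgbij.2 (m (g (Sum.inl i)))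
      cases w with
      | inl j => exact ⟨j, hw⟩
      | inr j =>
        exfalso
        have hA : K33.Adj (Sum.inl i) (Sum.inr j) := by simp [K33]
        exact hadj (g (Sum.inl i)) (hw ▸ hgadj _ _ hA)
    choose τ hτ using hP
    refine involFin3 τ (fun i => ?_) (fun i hi => ?_)
    · have h5 : g (Sum.inl (τ (τ i))) = g (Sum.inl i) := by
        rw [hτ (τ i), hτ i, hm2]
      exact Sum.inl.inj (hginj h5)
    · have h6 := hτ i
      rw [hi] at h6
      exact hmf (g (Sum.inl i)) h6.symm

/-- matching function on six explicit vertices -/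
def pairM {V : Type*} [DecidableEq V] (u v p1 q1 p2 q2 : V) (x : V) : V :=
  if x = u then v else if x = v then u else if x = p1 then q1
  else if x = q1 then p1 else if x = p2 then q2 else p2

set_option maxHeartbeats 1000000 in
lemma sixPlanar {V : Type*} [Fintype V] [DecidableEq V] (G : SimpleGraph V)
    (u v p1 q1 p2 q2 : V)
    (h1 : u ≠ v) (h2 : u ≠ p1) (h3 : u ≠ q1) (h4 : u ≠ p2) (h5 : u ≠ q2)
    (h6 : v ≠ p1) (h7 : v ≠ q1) (h8 : v ≠ p2) (h9 : v ≠ q2)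
    (h10 : p1 ≠ q1) (h11 : p1 ≠ p2) (h12 : p1 ≠ q2)
    (h13 : q1 ≠ p2) (h14 : q1 ≠ q2) (h15 : p2 ≠ q2)
    (huv : ¬ G.Adj u v) (hp1 : ¬ G.Adj p1 q1) (hp2 : ¬ G.Adj p2 q2) :
    ({u, v, p1, q1, p2, q2} : Finset V).card = 6 ∧
    IsPlanar (G.induce (↑({u, v, p1, q1, p2, q2} : Finset V) : Set V)) := by
  set S : Finset V := {u, v, p1, q1, p2, q2} with hSdef
  have hScard : S.card = 6 := by
    rw [hSdef]
    rw [Finset.card_insert_of_notMem (by simp [h1, h2, h3, h4, h5]),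
        Finset.card_insert_of_notMem (by simp [h6, h7, h8, h9]),
        Finset.card_insert_of_notMem (by simp [h10, h11, h12]),
        Finset.card_insert_of_notMem (by simp [h13, h14]),
        Finset.card_insert_of_notMem (by simp [h15]),
        Finset.card_singleton]
  refine ⟨hScard, ?_⟩
  have hmemS : ∀ x : V, x ∈ S ↔ (x = u ∨ x = v ∨ x = p1 ∨ x = q1 ∨ x = p2 ∨ x = q2) := by
    intro x; simp [hSdef]
  set M : V → V := pairM u v p1 q1 p2 q2 with hM
  have hMu : M u = v := by simp [hM, pairM]
  have hMv : M v = u := by simp [hM, pairM, h1.symm]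
  have hMp1 : M p1 = q1 := by simp [hM, pairM, h2.symm, h6.symm]
  have hMq1 : M q1 = p1 := by simp [hM, pairM, h3.symm, h7.symm, h10.symm]
  have hMp2 : M p2 = q2 := by simp [hM, pairM, h4.symm, h8.symm, h11.symm, h13.symm]
  have hMq2 : M q2 = p2 := by
    simp [hM, pairM, h5.symm, h9.symm, h12.symm, h14.symm, h15.symm]
  have hMS : ∀ x ∈ S, M x ∈ S := by
    intro x hx
    rcases (hmemS x).1 hx with rfl | rfl | rfl | rfl | rfl | rfl <;>
      simp only [hMu, hMv, hMp1, hMq1, hMp2, hMq2] <;> rw [hmemS] <;> tauto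
  have hM2 : ∀ x ∈ S, M (M x) = x := by
    intro x hx
    rcases (hmemS x).1 hx with rfl | rfl | rfl | rfl | rfl | rfl <;>
      simp only [hMu, hMv, hMp1, hMq1, hMp2, hMq2]
  have hMf : ∀ x ∈ S, M x ≠ x := by
    intro x hx
    rcases (hmemS x).1 hx with rfl | rfl | rfl | rfl | rfl | rfl <;>
      simp only [hMu, hMv, hMp1, hMq1, hMp2, hMq2]
    exacts [h1.symm, h1, h10.symm, h10, h15.symm, h15]
  have hMadj : ∀ x ∈ S, ¬ G.Adj x (M x) := by
    intro x hx
    rcases (hmemS x).1 hx with rfl | rfl | rfl | rfl | rfl | rfl <;>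
      simp only [hMu, hMv, hMp1, hMq1, hMp2, hMq2]
    exacts [huv, fun h => huv h.symm, hp1, fun h => hp1 h.symm, hp2, fun h => hp2 h.symm]
  have hcard6 : Fintype.card (↑S : Set V) = 6 := by
    rw [← hScard]; exact Fintype.card_coe S
  refine key hcard6 _ (fun x => ⟨M x.1, hMS x.1 x.2⟩) ?_ ?_ ?_
  · intro x
    exact Subtype.ext (hM2 x.1 x.2)
  · intro x h
    exact hMf x.1 x.2 (congrArg Subtype.val h)
  · intro x h
    exact hMadj x.1 x.2 h

lemma mkCase (n : ℕ) (u v p1 q1 p2 q2 : Fin 3 ⊕ Fin 3 ⊕ Fin n)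
    (h1 : u ≠ v) (h2 : u ≠ p1) (h3 : u ≠ q1) (h4 : u ≠ p2) (h5 : u ≠ q2)
    (h6 : v ≠ p1) (h7 : v ≠ q1) (h8 : v ≠ p2) (h9 : v ≠ q2)
    (h10 : p1 ≠ q1) (h11 : p1 ≠ p2) (h12 : p1 ≠ q2)
    (h13 : q1 ≠ p2) (h14 : q1 ≠ q2) (h15 : p2 ≠ q2)
    (hp1 : ¬ (KMulti n).Adj p1 q1) (hp2 : ¬ (KMulti n).Adj p2 q2) :
    ∃ S : Finset (Fin 3 ⊕ Fin 3 ⊕ Fin n), S.card = 6 ∧ Sᶜ.card = n ∧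
      IsPlanar (((KMulti n).deleteEdges {s(u, v)}).induce
        (↑S : Set (Fin 3 ⊕ Fin 3 ⊕ Fin n))) := by
  set G := (KMulti n).deleteEdges {s(u, v)} with hG
  have huv : ¬ G.Adj u v := by simp [hG]
  have hp1' : ¬ G.Adj p1 q1 := fun h => hp1 (deleteEdges_adj.1 h).1
  have hp2' : ¬ G.Adj p2 q2 := fun h => hp2 (deleteEdges_adj.1 h).1
  obtain ⟨hc, hpl⟩ := sixPlanar G u v p1 q1 p2 q2 h1 h2 h3 h4 h5 h6 h7 h8 h9 h10
    h11 h12 h13 h14 h15 huv hp1' hp2'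
  refine ⟨_, hc, ?_, hpl⟩
  rw [Finset.card_compl, hc]
  simp
  omega

lemma f31 : ∀ a : Fin 3, a ≠ a + 1 := by decide
lemma f32 : ∀ a : Fin 3, a ≠ a + 2 := by decide
lemma f33 : ∀ a : Fin 3, a + 1 ≠ a + 2 := by decide

/-- For every edge `K_{3²,1ⁿ}`, the deletion `K_{3²,1ⁿ} − e` is `n`-apex:
there is a set of 6 vertices whose induced subgraph is planar and whose
complement has size `n`. -/
theorem stmt_7 (n : ℕ) (u v : Fin 3 ⊕ Fin 3 ⊕ Fin n) (huv : (KMulti n).Adj u v) :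
    (∃ S : Finset (Fin 3 ⊕ Fin 3 ⊕ Fin n), S.card = 6 ∧ Sᶜ.card = n ∧
      IsPlanar (((KMulti n).deleteEdges {s(u, v)}).induce
        (↑S : Set (Fin 3 ⊕ Fin 3 ⊕ Fin n)))) ∧
    IsNApex ((KMulti n).deleteEdges {s(u, v)}) n := by
  have hex : ∃ S : Finset (Fin 3 ⊕ Fin 3 ⊕ Fin n), S.card = 6 ∧ Sᶜ.card = n ∧
      IsPlanar (((KMulti n).deleteEdges {s(u, v)}).induce
        (↑S : Set (Fin 3 ⊕ Fin 3 ⊕ Fin n))) := by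
    rcases u with a | b | i <;> rcases v with a' | b' | i'
    · exact absurd huv (by simp [KMulti])
    · -- inl a, inr inl b'
      exact mkCase n _ _ (Sum.inl (a+1)) (Sum.inl (a+2))
        (Sum.inr (Sum.inl (b'+1))) (Sum.inr (Sum.inl (b'+2)))
        (by simp) (by simp [f31]) (by simp [f32]) (by simp) (by simp)
        (by simp) (by simp) (by simp [f31]) (by simp [f32])
        (by simp [f33]) (by simp) (by simp) (by simp) (by simp) (by simp [f33])
        (by simp [KMulti]) (by simp [KMulti])
    · -- inl a, inr inr i'
      exact mkCase n _ _ (Sum.inl (a+1)) (Sum.inl (a+2))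
        (Sum.inr (Sum.inl 0)) (Sum.inr (Sum.inl 1))
        (by simp) (by simp [f31]) (by simp [f32]) (by simp) (by simp)
        (by simp) (by simp) (by simp) (by simp)
        (by simp [f33]) (by simp) (by simp) (by simp) (by simp) (by simp)
        (by simp [KMulti]) (by simp [KMulti])
    · -- inr inl b, inl a'
      exact mkCase n _ _ (Sum.inr (Sum.inl (b+1))) (Sum.inr (Sum.inl (b+2)))
        (Sum.inl (a'+1)) (Sum.inl (a'+2))
        (by simp) (by simp [f31]) (by simp [f32]) (by simp) (by simp)
        (by simp) (by simp) (by simp [f31]) (by simp [f32])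
        (by simp [f33]) (by simp) (by simp) (by simp) (by simp) (by simp [f33])
        (by simp [KMulti]) (by simp [KMulti])
    · exact absurd huv (by simp [KMulti])
    · -- inr inl b, inr inr i'
      exact mkCase n _ _ (Sum.inr (Sum.inl (b+1))) (Sum.inr (Sum.inl (b+2)))
        (Sum.inl 0) (Sum.inl 1)
        (by simp) (by simp [f31]) (by simp [f32]) (by simp) (by simp)
        (by simp) (by simp) (by simp) (by simp)
        (by simp [f33]) (by simp) (by simp) (by simp) (by simp) (by simp)
        (by simp [KMulti]) (by simp [KMulti])
    · -- inr inr i, inl a'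
      exact mkCase n _ _ (Sum.inl (a'+1)) (Sum.inl (a'+2))
        (Sum.inr (Sum.inl 0)) (Sum.inr (Sum.inl 1))
        (by simp) (by simp) (by simp) (by simp) (by simp)
        (by simp [f31]) (by simp [f32]) (by simp) (by simp)
        (by simp [f33]) (by simp) (by simp) (by simp) (by simp) (by simp)
        (by simp [KMulti]) (by simp [KMulti])
    · -- inr inr i, inr inl b'
      exact mkCase n _ _ (Sum.inr (Sum.inl (b'+1))) (Sum.inr (Sum.inl (b'+2)))
        (Sum.inl 0) (Sum.inl 1)
        (by simp) (by simp) (by simp) (by simp) (by simp)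
        (by simp [f31]) (by simp [f32]) (by simp) (by simp)
        (by simp [f33]) (by simp) (by simp) (by simp) (by simp) (by simp)
        (by simp [KMulti]) (by simp [KMulti])
    · -- inr inr i, inr inr i'
      have hij : i ≠ i' := by
        intro h; subst h; exact (KMulti n).loopless.irrefl _ huv
      exact mkCase n _ _ (Sum.inl 0) (Sum.inl 1)
        (Sum.inr (Sum.inl 0)) (Sum.inr (Sum.inl 1))
        (by simp [hij]) (by simp) (by simp) (by simp) (by simp)
        (by simp) (by simp) (by simp) (by simp)
        (by simp) (by simp) (by simp) (by simp) (by simp) (by simp)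
        (by simp [KMulti]) (by simp [KMulti])
  refine ⟨hex, ?_⟩
  obtain ⟨S, h6, hn, hpl⟩ := hex
  refine ⟨Sᶜ, le_of_eq hn, ?_⟩
  have hcc : (↑(Sᶜ) : Set (Fin 3 ⊕ Fin 3 ⊕ Fin n))ᶜ = ↑S := by
    rw [Finset.coe_compl, compl_compl]
  rw [hcc]
  exact hpl
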